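/- Let X be a metric space and Φ an arc field satisfying Conditions A (constant K_A), B, C on a ball B(a,r) around a ∈ X with time window [t,T]. Assume ρ(a,t;r,l) := sup{Lipschitz constants of h ↦ Φ^s_h(y) : y ∈ B(a,r), |s−t| ≤ l} is finite and positive, and B(a,r)-closure is complete. Set c := min{r/ρ(a,t;r,l), l}. Then there exists a curve σ : [t, t+c) → X with σ(t) = a such that for every s ∈ [t, t+c): lim_{h→0⁺} d(σ(s+h), Φ^s_h(σ(s)))/h = 0. -/

import Mathlib

noncomputable def eulerPt {X : Type*} (Φ : ℝ → X → ℝ → X) (a : X) (t δ : ℝ) : ℕ → X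
  | 0 => a
  | k+1 => Φ (t + k*δ) (eulerPt Φ a t δ k) δ

noncomputable def eulerCurve {X : Type*} (Φ : ℝ → X → ℝ → X) (a : X) (t δ : ℝ) (u : ℝ) : X :=
  Φ (t + (⌊(u-t)/δ⌋₊ : ℕ)*δ) (eulerPt Φ a t δ ⌊(u-t)/δ⌋₊) (u - t - (⌊(u-t)/δ⌋₊ : ℕ)*δ)

lemma eulerCurve_eq {X : Type*} [MetricSpace X] (Φ : ℝ → X → ℝ → X) (a : X) (t δ : ℝ)
    (hδ : 0 < δ) (hΦ0 : ∀ (s : ℝ) (x : X), Φ s x 0 = x) (k : ℕ) (w : ℝ)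
    (h1 : t + k*δ ≤ w) (h2 : w ≤ t + k*δ + δ) :
    eulerCurve Φ a t δ w = Φ (t + k*δ) (eulerPt Φ a t δ k) (w - (t + k*δ)) := by
  have hk : (k:ℝ) ≤ (w - t)/δ := by rw [le_div_iff₀ hδ]; linarith
  rcases lt_or_eq_of_le h2 with hlt | heq
  · have hfl : ⌊(w-t)/δ⌋₊ = k := by
      rw [Nat.floor_eq_iff (le_trans (Nat.cast_nonneg k) hk)]
      refine ⟨hk, ?_⟩
      rw [div_lt_iff₀ hδ]
      push_cast
      linarith
    unfold eulerCurve
    rw [hfl]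
    ring_nf
  · have hval : (w - t)/δ = ((k:ℝ) + 1) := by
      field_simp
      linarith
    have hfl : ⌊(w-t)/δ⌋₊ = k + 1 := by
      rw [hval]
      exact_mod_cast Nat.floor_natCast (k+1)
    unfold eulerCurve
    rw [hfl]
    have hrem : w - t - ((k:ℕ)+1 : ℕ)*δ = 0 := by push_cast; linarith
    push_cast
    rw [show w - t - ((k:ℝ)+1)*δ = 0 by linarith, hΦ0]
    show eulerPt Φ a t δ (k+1) = _
    rw [show eulerPt Φ a t δ (k+1) = Φ (t + k*δ) (eulerPt Φ a t δ k) δ from rfl]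
    congr 1
    linarith

lemma eulerCurve_grid {X : Type*} [MetricSpace X] (Φ : ℝ → X → ℝ → X) (a : X) (t δ : ℝ)
    (hδ : 0 < δ) (hΦ0 : ∀ (s : ℝ) (x : X), Φ s x 0 = x) (k : ℕ) :
    eulerCurve Φ a t δ (t + k*δ) = eulerPt Φ a t δ k := by
  rw [eulerCurve_eq Φ a t δ hδ hΦ0 k (t + k*δ) le_rfl (by nlinarith [hδ.le])]
  rw [sub_self, hΦ0]

section

variable {X : Type*} [MetricSpace X] (Φ : ℝ → X → ℝ → X) (a : X) (t r l ρ₀ δ c : ℝ)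

variable (hδ : 0 < δ) (hδ1 : δ ≤ 1) (hΦ0 : ∀ (s : ℝ) (x : X), Φ s x 0 = x)
  (hρ : 0 < ρ₀) (hcr : ρ₀ * c ≤ r) (hcl : c ≤ l) (hc0 : 0 ≤ c)
  (hspeed : ∀ y ∈ Metric.closedBall a r, ∀ s : ℝ, |s - t| ≤ l →
      ∀ h₁ ∈ Set.Icc (0 : ℝ) 1, ∀ h₂ ∈ Set.Icc (0 : ℝ) 1,
        dist (Φ s y h₁) (Φ s y h₂) ≤ ρ₀ * |h₁ - h₂|)

include hδ hδ1 hΦ0 hρ hcr hcl hc0 hspeed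

lemma eulerPt_ball : ∀ k : ℕ, (k:ℝ)*δ ≤ c → dist (eulerPt Φ a t δ k) a ≤ ρ₀ * ((k:ℝ)*δ) := by
  intro k
  induction k with
  | zero => intro _; simp [eulerPt]
  | succ k ih =>
    intro hk
    have hk' : (k:ℝ)*δ ≤ c := by
      have : (k:ℝ)*δ ≤ ((k:ℝ)+1)*δ := by nlinarith
      push_cast at hk; linarith
    have ihb := ih hk'
    have hmem : eulerPt Φ a t δ k ∈ Metric.closedBall a r := by
      rw [Metric.mem_closedBall]
      calc dist (eulerPt Φ a t δ k) a ≤ ρ₀ * ((k:ℝ)*δ) := ihb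
        _ ≤ ρ₀ * c := by nlinarith
        _ ≤ r := hcr
    have hstep := hspeed _ hmem (t + k*δ)
      (by rw [add_sub_cancel_left, abs_of_nonneg (by positivity)]
          calc (k:ℝ)*δ ≤ c := hk'
            _ ≤ l := hcl)
      δ ⟨hδ.le, hδ1⟩ 0 ⟨le_rfl, zero_le_one⟩
    rw [hΦ0, sub_zero, abs_of_nonneg hδ.le] at hstep
    calc dist (eulerPt Φ a t δ (k+1)) a
        ≤ dist (eulerPt Φ a t δ (k+1)) (eulerPt Φ a t δ k) + dist (eulerPt Φ a t δ k) a :=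
          dist_triangle _ _ _
      _ ≤ ρ₀ * δ + ρ₀ * ((k:ℝ)*δ) := add_le_add hstep ihb
      _ = ρ₀ * (((k:ℝ)+1)*δ) := by ring
      _ = ρ₀ * (((k+1:ℕ):ℝ)*δ) := by push_cast; ring

lemma eulerCurve_ball : ∀ u : ℝ, t ≤ u → u ≤ t + c →
    dist (eulerCurve Φ a t δ u) a ≤ ρ₀ * (u - t) := by
  intro u htu huc
  set k := ⌊(u-t)/δ⌋₊ with hkdef
  have h0 : 0 ≤ (u-t)/δ := div_nonneg (by linarith) hδ.le
  have hk1 : (k:ℝ)*δ ≤ u - t := by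
    have := Nat.floor_le h0
    rw [← hkdef] at this
    calc (k:ℝ)*δ ≤ ((u-t)/δ)*δ := by nlinarith
      _ = u - t := by field_simp
  have hk2 : u - t < ((k:ℝ)+1)*δ := by
    have := Nat.lt_floor_add_one ((u-t)/δ)
    rw [← hkdef] at this
    calc u - t = ((u-t)/δ)*δ := by field_simp
      _ < ((k:ℝ)+1)*δ := by push_cast at this ⊢; nlinarith
  have hkc : (k:ℝ)*δ ≤ c := by linarith
  have hxb := eulerPt_ball Φ a t r l ρ₀ δ c hδ hδ1 hΦ0 hρ hcr hcl hc0 hspeed k hkc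
  have hmem : eulerPt Φ a t δ k ∈ Metric.closedBall a r := by
    rw [Metric.mem_closedBall]
    calc dist (eulerPt Φ a t δ k) a ≤ ρ₀ * ((k:ℝ)*δ) := hxb
      _ ≤ ρ₀ * c := by nlinarith
      _ ≤ r := hcr
  have hcurve : eulerCurve Φ a t δ u = Φ (t + k*δ) (eulerPt Φ a t δ k) (u - t - k*δ) := rfl
  have hstep := hspeed _ hmem (t + k*δ)
    (by rw [add_sub_cancel_left, abs_of_nonneg (by positivity)]; linarith)
    (u - t - k*δ) ⟨by linarith, by linarith⟩ 0 ⟨le_rfl, zero_le_one⟩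
  rw [hΦ0, sub_zero, abs_of_nonneg (by linarith)] at hstep
  calc dist (eulerCurve Φ a t δ u) a
      ≤ dist (eulerCurve Φ a t δ u) (eulerPt Φ a t δ k) + dist (eulerPt Φ a t δ k) a :=
        dist_triangle _ _ _
    _ ≤ ρ₀ * (u - t - k*δ) + ρ₀ * ((k:ℝ)*δ) := by
        rw [hcurve]; exact add_le_add hstep hxb
    _ = ρ₀ * (u - t) := by ring

lemma eulerPt_lip : ∀ k k' : ℕ, k ≤ k' → (k':ℝ)*δ ≤ c →
    dist (eulerPt Φ a t δ k') (eulerPt Φ a t δ k) ≤ ρ₀ * (((k':ℝ) - k)*δ) := by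
  intro k k' hkk'
  induction k' with
  | zero =>
    intro _
    interval_cases k
    simp
  | succ m ih =>
    intro hc'
    rcases Nat.eq_or_lt_of_le hkk' with heq | hlt
    · subst heq; simp
    · have hkm : k ≤ m := Nat.lt_succ_iff.mp hlt
      have hmc : (m:ℝ)*δ ≤ c := by
        have : (m:ℝ)*δ ≤ ((m:ℝ)+1)*δ := by nlinarith
        push_cast at hc'; linarith
      have ihb := ih hkm hmc
      have hxb := eulerPt_ball Φ a t r l ρ₀ δ c hδ hδ1 hΦ0 hρ hcr hcl hc0 hspeed m hmc
      have hmem : eulerPt Φ a t δ m ∈ Metric.closedBall a r := by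
        rw [Metric.mem_closedBall]
        calc dist (eulerPt Φ a t δ m) a ≤ ρ₀ * ((m:ℝ)*δ) := hxb
          _ ≤ ρ₀ * c := by nlinarith
          _ ≤ r := hcr
      have hstep := hspeed _ hmem (t + m*δ)
        (by rw [add_sub_cancel_left, abs_of_nonneg (by positivity)]; linarith)
        δ ⟨hδ.le, hδ1⟩ 0 ⟨le_rfl, zero_le_one⟩
      rw [hΦ0, sub_zero, abs_of_nonneg hδ.le] at hstep
      calc dist (eulerPt Φ a t δ (m+1)) (eulerPt Φ a t δ k)
          ≤ dist (eulerPt Φ a t δ (m+1)) (eulerPt Φ a t δ m)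
            + dist (eulerPt Φ a t δ m) (eulerPt Φ a t δ k) := dist_triangle _ _ _
        _ ≤ ρ₀ * δ + ρ₀ * (((m:ℝ) - k)*δ) := add_le_add hstep ihb
        _ = ρ₀ * ((((m:ℕ)+1:ℕ):ℝ) - k) * δ := by push_cast; ring
        _ = ρ₀ * (((((m:ℕ)+1:ℕ):ℝ) - k) * δ) := by ring

lemma eulerCurve_lip : ∀ u₁ u₂ : ℝ, t ≤ u₁ → u₁ ≤ u₂ → u₂ ≤ t + c →
    dist (eulerCurve Φ a t δ u₁) (eulerCurve Φ a t δ u₂) ≤ ρ₀ * (u₂ - u₁) := by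
  intro u₁ u₂ ht1 h12 h2c
  set k₁ := ⌊(u₁-t)/δ⌋₊ with hk1def
  set k₂ := ⌊(u₂-t)/δ⌋₊ with hk2def
  have h01 : 0 ≤ (u₁-t)/δ := div_nonneg (by linarith) hδ.le
  have h02 : 0 ≤ (u₂-t)/δ := div_nonneg (by linarith) hδ.le
  have hfl1 : (k₁:ℝ)*δ ≤ u₁ - t := by
    have := Nat.floor_le h01
    rw [← hk1def] at this
    calc (k₁:ℝ)*δ ≤ ((u₁-t)/δ)*δ := by nlinarith
      _ = u₁ - t := by field_simp
  have hfu1 : u₁ - t < ((k₁:ℝ)+1)*δ := by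
    have := Nat.lt_floor_add_one ((u₁-t)/δ)
    rw [← hk1def] at this
    calc u₁ - t = ((u₁-t)/δ)*δ := by field_simp
      _ < ((k₁:ℝ)+1)*δ := by push_cast at this; nlinarith
  have hfl2 : (k₂:ℝ)*δ ≤ u₂ - t := by
    have := Nat.floor_le h02
    rw [← hk2def] at this
    calc (k₂:ℝ)*δ ≤ ((u₂-t)/δ)*δ := by nlinarith
      _ = u₂ - t := by field_simp
  have hfu2 : u₂ - t < ((k₂:ℝ)+1)*δ := by
    have := Nat.lt_floor_add_one ((u₂-t)/δ)
    rw [← hk2def] at this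
    calc u₂ - t = ((u₂-t)/δ)*δ := by field_simp
      _ < ((k₂:ℝ)+1)*δ := by push_cast at this; nlinarith
  have hk12 : k₁ ≤ k₂ := by
    rw [hk1def, hk2def]
    exact Nat.floor_le_floor (by gcongr <;> linarith)
  have hb1 := eulerPt_ball Φ a t r l ρ₀ δ c hδ hδ1 hΦ0 hρ hcr hcl hc0 hspeed k₁ (by linarith)
  have hb2 := eulerPt_ball Φ a t r l ρ₀ δ c hδ hδ1 hΦ0 hρ hcr hcl hc0 hspeed k₂ (by linarith)
  have hmem1 : eulerPt Φ a t δ k₁ ∈ Metric.closedBall a r := by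
    rw [Metric.mem_closedBall]
    calc dist (eulerPt Φ a t δ k₁) a ≤ ρ₀ * ((k₁:ℝ)*δ) := hb1
      _ ≤ ρ₀ * c := by nlinarith
      _ ≤ r := hcr
  have hmem2 : eulerPt Φ a t δ k₂ ∈ Metric.closedBall a r := by
    rw [Metric.mem_closedBall]
    calc dist (eulerPt Φ a t δ k₂) a ≤ ρ₀ * ((k₂:ℝ)*δ) := hb2
      _ ≤ ρ₀ * c := by nlinarith
      _ ≤ r := hcr
  have hcurve1 : eulerCurve Φ a t δ u₁ = Φ (t + k₁*δ) (eulerPt Φ a t δ k₁) (u₁ - t - k₁*δ) := rfl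
  have hcurve2 : eulerCurve Φ a t δ u₂ = Φ (t + k₂*δ) (eulerPt Φ a t δ k₂) (u₂ - t - k₂*δ) := rfl
  have habs1 : |t + (k₁:ℝ)*δ - t| ≤ l := by
    rw [add_sub_cancel_left, abs_of_nonneg (by positivity)]; linarith
  have habs2 : |t + (k₂:ℝ)*δ - t| ≤ l := by
    rw [add_sub_cancel_left, abs_of_nonneg (by positivity)]; linarith
  rcases Nat.eq_or_lt_of_le hk12 with heq | hlt
  · -- same cell
    have h2cell : u₂ - t < ((k₁:ℝ)+1)*δ := by rw [heq]; exact hfu2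
    have hstep := hspeed _ hmem1 (t + k₁*δ) habs1
      (u₁ - t - k₁*δ) ⟨by linarith, by linarith⟩ (u₂ - t - k₁*δ) ⟨by linarith, by linarith⟩
    rw [hcurve1, hcurve2, ← heq]
    calc dist (Φ (t + k₁*δ) (eulerPt Φ a t δ k₁) (u₁ - t - k₁*δ))
          (Φ (t + k₁*δ) (eulerPt Φ a t δ k₁) (u₂ - t - k₁*δ))
        ≤ ρ₀ * |u₁ - t - k₁*δ - (u₂ - t - k₁*δ)| := hstep
      _ = ρ₀ * (u₂ - u₁) := by rw [abs_of_nonpos (by linarith)]; ring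
  · -- k₁ < k₂
    have hk2c : (k₂:ℝ)*δ ≤ c := by linarith
    have hstep1 := hspeed _ hmem1 (t + k₁*δ) habs1
      (u₁ - t - k₁*δ) ⟨by linarith, by linarith⟩ δ ⟨hδ.le, hδ1⟩
    have hx1 : eulerPt Φ a t δ (k₁+1) = Φ (t + k₁*δ) (eulerPt Φ a t δ k₁) δ := rfl
    have hmid := eulerPt_lip Φ a t r l ρ₀ δ c hδ hδ1 hΦ0 hρ hcr hcl hc0 hspeed (k₁+1) k₂ hlt hk2c
    have hstep2 := hspeed _ hmem2 (t + k₂*δ) habs2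
      (u₂ - t - k₂*δ) ⟨by linarith, by linarith⟩ 0 ⟨le_rfl, zero_le_one⟩
    rw [hΦ0, sub_zero, abs_of_nonneg (by linarith)] at hstep2
    have hk1k2 : ((k₁:ℝ)+1) ≤ (k₂:ℝ) := by exact_mod_cast hlt
    calc dist (eulerCurve Φ a t δ u₁) (eulerCurve Φ a t δ u₂)
        ≤ dist (eulerCurve Φ a t δ u₁) (eulerPt Φ a t δ (k₁+1))
          + dist (eulerPt Φ a t δ (k₁+1)) (eulerPt Φ a t δ k₂)
          + dist (eulerPt Φ a t δ k₂) (eulerCurve Φ a t δ u₂) := dist_triangle4 _ _ _ _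
      _ ≤ ρ₀ * |u₁ - t - k₁*δ - δ| + ρ₀ * (((k₂:ℝ) - (k₁+1))*δ) + ρ₀ * (u₂ - t - k₂*δ) := by
          refine add_le_add (add_le_add ?_ ?_) ?_
          · rw [hcurve1, hx1]; exact hstep1
          · have := dist_comm (eulerPt Φ a t δ (k₁+1)) (eulerPt Φ a t δ k₂) ▸ hmid
            calc dist (eulerPt Φ a t δ (k₁+1)) (eulerPt Φ a t δ k₂)
                = dist (eulerPt Φ a t δ k₂) (eulerPt Φ a t δ (k₁+1)) := dist_comm _ _
              _ ≤ ρ₀ * (((k₂:ℝ) - ((k₁:ℕ)+1:ℕ))*δ) := hmid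
              _ = ρ₀ * (((k₂:ℝ) - (k₁+1))*δ) := by push_cast; ring
          · rw [hcurve2]
            exact dist_comm (eulerPt Φ a t δ k₂) (eulerCurve Φ a t δ u₂) ▸ hstep2
      _ = ρ₀ * (u₂ - u₁) := by
          rw [abs_of_nonpos (by nlinarith)]
          ring

local notation "ξ" => eulerCurve Φ a t δ
local notation "xx" => eulerPt Φ a t δ

lemma master (T K_A K_B C α ε η s h : ℝ) (g : ℝ → ℝ → ℝ)
    (hts : t ≤ s) (hh : 0 < h) (hδh : δ ≤ h) (hhε : h ≤ ε) (hε1 : ε ≤ 1)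
    (hsh : s + h < t + c) (hcT : t + c ≤ T)
    (hCpos : 0 < C) (hα0 : 0 < α) (hη : 0 ≤ η)
    (Hg : ∀ p q, 0 < p → p ≤ h → 0 < q → q ≤ h → g p q ≤ η)
    (hgnn : ∀ u v, 0 ≤ g u v)
    (hA : ∀ x ∈ Metric.ball a r, ∀ y ∈ Metric.ball a r, ∀ h ∈ Set.Icc 0 ε,
      ∀ s ∈ Set.Icc t T, dist (Φ s x h) (Φ s y h) ≤ dist x y * (1 + h * K_A))
    (hB : ∀ b ∈ Metric.ball a r, ∀ l' ∈ Set.Icc 0 ε, ∀ h ∈ Set.Icc 0 ε,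
      ∀ s ∈ Set.Icc t T,
        dist (Φ s b (l' + h)) (Φ s (Φ s b l') h) ≤ h * g l' h * K_B)
    (hCcond : ∀ b ∈ Metric.ball a r, ∀ h ∈ Set.Icc 0 ε, ∀ s₁ ∈ Set.Icc t T,
      ∀ s₂ ∈ Set.Icc t T, dist (Φ s₁ b h) (Φ s₂ b h) ≤ C * h * |s₁ - s₂| ^ α) :
    dist (ξ (s+h)) (Φ s (ξ s) h) ≤ Real.exp (3*|K_A|) * ((η*|K_B| + C*h^α) * h) := by
  have hstc : s - t < c := by linarith
  have hstc' : s + h - t < c := by linarith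
  obtain ⟨k₀, hk₀def⟩ : ∃ k : ℕ, k = ⌊(s-t)/δ⌋₊ := ⟨_, rfl⟩
  have h0st : 0 ≤ (s-t)/δ := div_nonneg (by linarith) hδ.le
  have hq_le : (k₀:ℝ)*δ ≤ s - t := by
    have := Nat.floor_le h0st
    rw [← hk₀def] at this
    calc (k₀:ℝ)*δ ≤ ((s-t)/δ)*δ := mul_le_mul_of_nonneg_right this hδ.le
      _ = s - t := by field_simp
  have hq_lt : s - t < ((k₀:ℝ)+1)*δ := by
    have := Nat.lt_floor_add_one ((s-t)/δ)
    rw [← hk₀def] at this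
    calc s - t = ((s-t)/δ)*δ := by field_simp
      _ < ((k₀:ℝ)+1)*δ := by
          have := mul_lt_mul_of_pos_right this hδ
          push_cast at this ⊢
          linarith
  have hrpow : (0:ℝ) ≤ h^α := Real.rpow_nonneg hh.le α
  obtain ⟨Err, hErrdef⟩ : ∃ e : ℝ, e = η*|K_B| + C*h^α := ⟨_, rfl⟩
  have hErr : 0 ≤ Err := by
    rw [hErrdef]
    have h1 : (0:ℝ) ≤ η*|K_B| := mul_nonneg hη (abs_nonneg _)
    have h2 : (0:ℝ) ≤ C*h^α := mul_nonneg hCpos.le hrpow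
    linarith
  obtain ⟨E₀, hE₀def⟩ : ∃ e : ℝ, e = Real.exp (δ*|K_A|) := ⟨_, rfl⟩
  have hE₀ : 1 ≤ E₀ := hE₀def ▸ Real.one_le_exp (mul_nonneg hδ.le (abs_nonneg _))
  have hE₀0 : 0 ≤ E₀ := by linarith
  obtain ⟨τ, hτ0, hτs⟩ : ∃ τ : ℕ → ℝ, τ 0 = s ∧
      ∀ m : ℕ, τ (m+1) = min (t + ((k₀:ℝ)+((m+1:ℕ):ℝ))*δ) (s+h) :=
    ⟨fun j => if j = 0 then s else min (t + ((k₀:ℝ)+(j:ℝ))*δ) (s+h), rfl, fun m => rfl⟩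
  have hτub : ∀ j, τ j ≤ s + h := by
    intro j
    cases j with
    | zero => rw [hτ0]; linarith
    | succ m => rw [hτs m]; exact min_le_right _ _
  have hτlb : ∀ j, s ≤ τ j := by
    intro j
    cases j with
    | zero => rw [hτ0]
    | succ m =>
      rw [hτs m]
      refine le_min ?_ (by linarith)
      have hm0 : (0:ℝ) ≤ (m:ℝ) := Nat.cast_nonneg m
      push_cast
      linarith [mul_nonneg hm0 hδ.le, hq_lt]
  have hτgridub : ∀ m : ℕ, τ (m+1) ≤ t + ((k₀:ℝ)+((m+1:ℕ):ℝ))*δ := by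
    intro m; rw [hτs m]; exact min_le_left _ _
  have hτmono : ∀ j, τ j ≤ τ (j+1) := by
    intro j
    cases j with
    | zero => rw [hτ0]; exact hτlb 1
    | succ m =>
      rw [hτs m, hτs (m+1)]
      refine min_le_min ?_ le_rfl
      push_cast
      have hm0 : (0:ℝ) ≤ (m:ℝ) := Nat.cast_nonneg m
      linarith [hδ.le]
  have hτstep : ∀ j, τ (j+1) - τ j ≤ δ := by
    intro j
    cases j with
    | zero =>
      rw [hτ0]
      have h1 : τ 1 ≤ t + ((k₀:ℝ)+1)*δ := by
        have := hτgridub 0; push_cast at this; linarith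
      linarith [hq_le]
    | succ m =>
      have h1 : τ (m+2) ≤ t + ((k₀:ℝ)+((m+2:ℕ):ℝ))*δ := hτgridub (m+1)
      have h2 : τ (m+2) ≤ s + h := hτub _
      rw [hτs m]
      rcases min_cases (t + ((k₀:ℝ)+((m+1:ℕ):ℝ))*δ) (s+h) with ⟨he, _⟩ | ⟨he, _⟩
      · rw [he]; push_cast at h1 ⊢; linarith
      · rw [he]; linarith
  -- membership helpers
  have hballs : ξ s ∈ Metric.ball a r := by
    rw [Metric.mem_ball]
    calc dist (ξ s) a ≤ ρ₀ * (s - t) :=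
          eulerCurve_ball Φ a t r l ρ₀ δ c hδ hδ1 hΦ0 hρ hcr hcl hc0 hspeed s hts (by linarith)
      _ < ρ₀ * c := (mul_lt_mul_iff_right₀ hρ).mpr hstc
      _ ≤ r := hcr
  have hballu : ∀ u, t ≤ u → u ≤ s + h → ξ u ∈ Metric.ball a r := by
    intro u h1 h2
    rw [Metric.mem_ball]
    calc dist (ξ u) a ≤ ρ₀ * (u - t) :=
          eulerCurve_ball Φ a t r l ρ₀ δ c hδ hδ1 hΦ0 hρ hcr hcl hc0 hspeed u h1 (by linarith)
      _ < ρ₀ * c := (mul_lt_mul_iff_right₀ hρ).mpr (by linarith)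
      _ ≤ r := hcr
  have hsmem : s ∈ Set.Icc t T := ⟨hts, by linarith⟩
  have hξscb : ξ s ∈ Metric.closedBall a r := Metric.ball_subset_closedBall hballs
  have hYdist : ∀ w : ℝ, 0 ≤ w → w ≤ h → dist (Φ s (ξ s) w) (ξ s) ≤ ρ₀ * w := by
    intro w hw1 hw2
    have := hspeed _ hξscb s (by rw [abs_of_nonneg (by linarith)]; linarith)
      w ⟨hw1, by linarith⟩ 0 ⟨le_rfl, zero_le_one⟩
    rwa [hΦ0, sub_zero, abs_of_nonneg hw1] at this
  have hYball : ∀ w : ℝ, 0 ≤ w → s + w ≤ s + h → Φ s (ξ s) w ∈ Metric.ball a r := by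
    intro w hw1 hw2
    rw [Metric.mem_ball]
    have hd1 := hYdist w hw1 (by linarith)
    have hd2 : dist (ξ s) a ≤ ρ₀ * (s - t) :=
      eulerCurve_ball Φ a t r l ρ₀ δ c hδ hδ1 hΦ0 hρ hcr hcl hc0 hspeed s hts (by linarith)
    calc dist (Φ s (ξ s) w) a ≤ dist (Φ s (ξ s) w) (ξ s) + dist (ξ s) a := dist_triangle _ _ _
      _ ≤ ρ₀ * w + ρ₀ * (s - t) := add_le_add hd1 hd2
      _ = ρ₀ * (w + (s - t)) := by ring
      _ < ρ₀ * c := (mul_lt_mul_iff_right₀ hρ).mpr (by linarith)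
      _ ≤ r := hcr
  -- the key induction
  have key : ∀ j : ℕ, dist (ξ (τ j)) (Φ s (ξ s) (τ j - s)) ≤ Err * (τ j - s) * E₀^j := by
    intro j
    induction j with
    | zero => rw [hτ0, sub_self, hΦ0]; simp
    | succ j ih =>
      by_cases htriv : τ (j+1) = τ j
      · rw [htriv]
        calc dist (ξ (τ j)) (Φ s (ξ s) (τ j - s)) ≤ Err * (τ j - s) * E₀^j := ih
          _ ≤ Err * (τ j - s) * E₀^(j+1) := by
              have h1 : 0 ≤ Err * (τ j - s) := mul_nonneg hErr (by linarith [hτlb j])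
              have h2 : E₀^j ≤ E₀^(j+1) := pow_le_pow_right₀ hE₀ (by omega)
              exact mul_le_mul_of_nonneg_left h2 h1
      · have hlt : τ j < τ (j+1) := lt_of_le_of_ne (hτmono j) (Ne.symm htriv)
        have hΔpos : 0 < τ (j+1) - τ j := by linarith
        have hΔδ : τ (j+1) - τ j ≤ δ := hτstep j
        cases j with
        | zero =>
          -- first (possibly partial) step, within the cell containing s
          rw [hτ0] at hlt hΔpos hΔδ
          simp only [Nat.zero_add] at hlt hΔpos hΔδ
          have hτ1ub : τ 1 ≤ t + ((k₀:ℝ)+1)*δ := by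
            have := hτgridub 0; push_cast at this; linarith
          have hτ1s : s ≤ τ 1 := hτlb 1
          have hτ1sh : τ 1 ≤ s + h := hτub 1
          have hξs : ξ s = Φ (t + (k₀:ℝ)*δ) (xx k₀) (s - (t + (k₀:ℝ)*δ)) := by
            rw [hk₀def]
            exact eulerCurve_eq Φ a t δ hδ hΦ0 ⌊(s-t)/δ⌋₊ s
              (by rw [← hk₀def]; linarith) (by rw [← hk₀def]; linarith)
          have hξτ1 : ξ (τ 1) = Φ (t + (k₀:ℝ)*δ) (xx k₀) (τ 1 - (t + (k₀:ℝ)*δ)) := by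
            rw [hk₀def]
            exact eulerCurve_eq Φ a t δ hδ hΦ0 ⌊(s-t)/δ⌋₊ (τ 1)
              (by rw [← hk₀def]; linarith) (by rw [← hk₀def]; linarith)
          have hqmem : (t + (k₀:ℝ)*δ) ∈ Set.Icc t T := by
            constructor
            · have : (0:ℝ) ≤ (k₀:ℝ)*δ := mul_nonneg (Nat.cast_nonneg k₀) hδ.le
              linarith
            · linarith
          have hxball : xx k₀ ∈ Metric.ball a r := by
            rw [Metric.mem_ball]
            calc dist (xx k₀) a ≤ ρ₀ * ((k₀:ℝ)*δ) :=
                  eulerPt_ball Φ a t r l ρ₀ δ c hδ hδ1 hΦ0 hρ hcr hcl hc0 hspeed k₀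
                    (by linarith)
              _ ≤ ρ₀ * (s - t) := mul_le_mul_of_nonneg_left hq_le hρ.le
              _ < ρ₀ * c := (mul_lt_mul_iff_right₀ hρ).mpr hstc
              _ ≤ r := hcr
          have hT1 : dist (Φ (t + (k₀:ℝ)*δ) (xx k₀) ((s - (t + (k₀:ℝ)*δ)) + (τ 1 - s)))
              (Φ (t + (k₀:ℝ)*δ) (Φ (t + (k₀:ℝ)*δ) (xx k₀) (s - (t + (k₀:ℝ)*δ))) (τ 1 - s))
              ≤ (τ 1 - s) * (η * |K_B|) := by
            rcases eq_or_lt_of_le (show t + (k₀:ℝ)*δ ≤ s by linarith) with heq | hltq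
            · rw [← heq, sub_self, zero_add, hΦ0, dist_self]
              have h9 : (0:ℝ) ≤ τ 1 - (t + (k₀:ℝ)*δ) := by linarith [hΔpos]
              exact mul_nonneg h9 (mul_nonneg hη (abs_nonneg _))
            · have hbb := hB (xx k₀) hxball (s - (t + (k₀:ℝ)*δ))
                ⟨by linarith, by linarith⟩ (τ 1 - s) ⟨hΔpos.le, by linarith⟩ _ hqmem
              have hgη : g (s - (t + (k₀:ℝ)*δ)) (τ 1 - s) ≤ η :=
                Hg _ _ (by linarith) (by linarith) hΔpos (by linarith)
              have hgn := hgnn (s - (t + (k₀:ℝ)*δ)) (τ 1 - s)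
              have hKB : K_B ≤ |K_B| := le_abs_self _
              calc dist _ _ ≤ (τ 1 - s) * g (s - (t + (k₀:ℝ)*δ)) (τ 1 - s) * K_B := hbb
                _ ≤ (τ 1 - s) * g (s - (t + (k₀:ℝ)*δ)) (τ 1 - s) * |K_B| :=
                    mul_le_mul_of_nonneg_left hKB (mul_nonneg hΔpos.le hgn)
                _ ≤ (τ 1 - s) * η * |K_B| :=
                    mul_le_mul_of_nonneg_right
                      (mul_le_mul_of_nonneg_left hgη hΔpos.le) (abs_nonneg _)
                _ = (τ 1 - s) * (η * |K_B|) := by ring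
          have hT2 : dist (Φ (t + (k₀:ℝ)*δ) (ξ s) (τ 1 - s)) (Φ s (ξ s) (τ 1 - s))
              ≤ C * h^α * (τ 1 - s) := by
            have hcc := hCcond (ξ s) hballs (τ 1 - s) ⟨hΔpos.le, by linarith⟩ _ hqmem s hsmem
            have habs : |t + (k₀:ℝ)*δ - s| ≤ h := by
              rw [abs_of_nonpos (by linarith)]; linarith
            have hpow : |t + (k₀:ℝ)*δ - s|^α ≤ h^α :=
              Real.rpow_le_rpow (abs_nonneg _) habs hα0.le
            calc dist _ _ ≤ C * (τ 1 - s) * |t + (k₀:ℝ)*δ - s|^α := hcc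
              _ ≤ C * (τ 1 - s) * h^α :=
                  mul_le_mul_of_nonneg_left hpow (mul_nonneg hCpos.le hΔpos.le)
              _ = C * h^α * (τ 1 - s) := by ring
          calc dist (ξ (τ 1)) (Φ s (ξ s) (τ 1 - s))
              ≤ dist (ξ (τ 1)) (Φ (t + (k₀:ℝ)*δ) (ξ s) (τ 1 - s))
                + dist (Φ (t + (k₀:ℝ)*δ) (ξ s) (τ 1 - s)) (Φ s (ξ s) (τ 1 - s)) :=
                dist_triangle _ _ _
            _ ≤ (τ 1 - s) * (η * |K_B|) + C * h^α * (τ 1 - s) := by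
                refine add_le_add ?_ hT2
                rw [hξτ1, hξs, show τ 1 - (t + (k₀:ℝ)*δ) =
                  (s - (t + (k₀:ℝ)*δ)) + (τ 1 - s) by ring]
                exact hT1
            _ ≤ Err * (τ 1 - s) * E₀^1 := by
                rw [hErrdef, pow_one]
                have h1 : (τ 1 - s) * (η * |K_B|) + C * h^α * (τ 1 - s)
                    = ((η*|K_B| + C*h^α) * (τ 1 - s)) * 1 := by ring
                rw [h1]
                have hnn : (0:ℝ) ≤ η*|K_B| + C*h^α := by
                  have h2 := mul_nonneg hη (abs_nonneg K_B)
                  have h3 := mul_nonneg hCpos.le hrpow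
                  linarith
                exact mul_le_mul_of_nonneg_left hE₀ (mul_nonneg hnn hΔpos.le)
        | succ m =>
          -- generic step starting from a grid point
          have hτjlt : τ (m+1) < s + h := lt_of_lt_of_le hlt (hτub (m+2))
          have hτjgrid : τ (m+1) = t + ((k₀:ℝ)+((m+1:ℕ):ℝ))*δ := by
            rw [hτs m]
            rcases min_cases (t + ((k₀:ℝ)+((m+1:ℕ):ℝ))*δ) (s+h) with ⟨he, _⟩ | ⟨he, hge⟩
            · exact he
            · exfalso; rw [hτs m, he] at hτjlt; exact lt_irrefl _ hτjlt
          have hcast : (((k₀+(m+1) : ℕ)):ℝ) = (k₀:ℝ) + ((m+1:ℕ):ℝ) := by push_cast; ring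
          have hgrid' : t + (((k₀+(m+1):ℕ)):ℝ)*δ = τ (m+1) := by rw [hcast, hτjgrid]
          have hsj : s < τ (m+1) := by
            rw [hτjgrid]
            have hm0 : (0:ℝ) ≤ (m:ℝ) := Nat.cast_nonneg m
            push_cast
            linarith [mul_nonneg hm0 hδ.le, hq_lt]
          have hτjmem : τ (m+1) ∈ Set.Icc t T := ⟨by linarith, by linarith [hτub (m+1)]⟩
          have hτjs : τ (m+1) - s ≤ h := by linarith [hτub (m+1)]
          have hξτj : ξ (τ (m+1)) = xx (k₀+(m+1)) := by
            rw [← hgrid']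
            exact eulerCurve_grid Φ a t δ hδ hΦ0 (k₀+(m+1))
          have hξτj1 : ξ (τ (m+2)) = Φ (τ (m+1)) (xx (k₀+(m+1))) (τ (m+2) - τ (m+1)) := by
            have := eulerCurve_eq Φ a t δ hδ hΦ0 (k₀+(m+1)) (τ (m+2))
              (by rw [hgrid']; exact (hτmono (m+1))) (by rw [hgrid']; linarith)
            rw [this, hgrid']
          have hxjball : ξ (τ (m+1)) ∈ Metric.ball a r :=
            hballu (τ (m+1)) (by linarith [hτlb (m+1)]) (hτub (m+1))
          have hYj : Φ s (ξ s) (τ (m+1) - s) ∈ Metric.ball a r :=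
            hYball (τ (m+1) - s) (by linarith) (by linarith)
          have hT1 : dist (Φ (τ (m+1)) (ξ (τ (m+1))) (τ (m+2) - τ (m+1)))
              (Φ s (ξ (τ (m+1))) (τ (m+2) - τ (m+1)))
              ≤ C * h^α * (τ (m+2) - τ (m+1)) := by
            have hcc := hCcond (ξ (τ (m+1))) hxjball (τ (m+2) - τ (m+1))
              ⟨hΔpos.le, by linarith⟩ (τ (m+1)) hτjmem s hsmem
            have habs : |τ (m+1) - s| ≤ h := by
              rw [abs_of_nonneg (by linarith)]; linarith
            have hpow : |τ (m+1) - s|^α ≤ h^α :=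
              Real.rpow_le_rpow (abs_nonneg _) habs hα0.le
            calc dist _ _ ≤ C * (τ (m+2) - τ (m+1)) * |τ (m+1) - s|^α := hcc
              _ ≤ C * (τ (m+2) - τ (m+1)) * h^α :=
                  mul_le_mul_of_nonneg_left hpow (mul_nonneg hCpos.le hΔpos.le)
              _ = C * h^α * (τ (m+2) - τ (m+1)) := by ring
          have hT2 : dist (Φ s (ξ (τ (m+1))) (τ (m+2) - τ (m+1)))
              (Φ s (Φ s (ξ s) (τ (m+1) - s)) (τ (m+2) - τ (m+1)))
              ≤ Err * (τ (m+1) - s) * E₀^(m+1) * E₀ := by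
            have haa := hA (ξ (τ (m+1))) hxjball (Φ s (ξ s) (τ (m+1) - s)) hYj
              (τ (m+2) - τ (m+1)) ⟨hΔpos.le, by linarith⟩ s hsmem
            have hfac : 1 + (τ (m+2) - τ (m+1)) * K_A ≤ E₀ := by
              have h1 : (τ (m+2) - τ (m+1)) * K_A ≤ δ * |K_A| := by
                have h2 : (τ (m+2) - τ (m+1)) * K_A ≤ (τ (m+2) - τ (m+1)) * |K_A| :=
                  mul_le_mul_of_nonneg_left (le_abs_self K_A) hΔpos.le
                have h3 : (τ (m+2) - τ (m+1)) * |K_A| ≤ δ * |K_A| :=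
                  mul_le_mul_of_nonneg_right hΔδ (abs_nonneg _)
                linarith
              have h2 := Real.add_one_le_exp (δ*|K_A|)
              rw [hE₀def]
              linarith
            calc dist _ _
                ≤ dist (ξ (τ (m+1))) (Φ s (ξ s) (τ (m+1) - s))
                  * (1 + (τ (m+2) - τ (m+1)) * K_A) := haa
              _ ≤ dist (ξ (τ (m+1))) (Φ s (ξ s) (τ (m+1) - s)) * E₀ :=
                  mul_le_mul_of_nonneg_left hfac dist_nonneg
              _ ≤ Err * (τ (m+1) - s) * E₀^(m+1) * E₀ :=
                  mul_le_mul_of_nonneg_right ih hE₀0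
          have hT3 : dist (Φ s (Φ s (ξ s) (τ (m+1) - s)) (τ (m+2) - τ (m+1)))
              (Φ s (ξ s) ((τ (m+1) - s) + (τ (m+2) - τ (m+1))))
              ≤ (τ (m+2) - τ (m+1)) * (η * |K_B|) := by
            have hbb := hB (ξ s) hballs (τ (m+1) - s) ⟨by linarith, by linarith⟩
              (τ (m+2) - τ (m+1)) ⟨hΔpos.le, by linarith⟩ s hsmem
            have hgη : g (τ (m+1) - s) (τ (m+2) - τ (m+1)) ≤ η :=
              Hg _ _ (by linarith) (by linarith) hΔpos (by linarith)
            have hgn := hgnn (τ (m+1) - s) (τ (m+2) - τ (m+1))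
            have hKB : K_B ≤ |K_B| := le_abs_self _
            rw [dist_comm]
            calc dist _ _ ≤ (τ (m+2) - τ (m+1)) * g (τ (m+1) - s) (τ (m+2) - τ (m+1)) * K_B :=
                  hbb
              _ ≤ (τ (m+2) - τ (m+1)) * g (τ (m+1) - s) (τ (m+2) - τ (m+1)) * |K_B| :=
                  mul_le_mul_of_nonneg_left hKB (mul_nonneg hΔpos.le hgn)
              _ ≤ (τ (m+2) - τ (m+1)) * η * |K_B| :=
                  mul_le_mul_of_nonneg_right
                    (mul_le_mul_of_nonneg_left hgη hΔpos.le) (abs_nonneg _)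
              _ = (τ (m+2) - τ (m+1)) * (η * |K_B|) := by ring
          have hE1 : 1 ≤ E₀^(m+2) := one_le_pow₀ hE₀
          have hsum : C * h^α * (τ (m+2) - τ (m+1)) + (τ (m+2) - τ (m+1)) * (η * |K_B|)
              = (τ (m+2) - τ (m+1)) * Err := by rw [hErrdef]; ring
          have hΔE : (τ (m+2) - τ (m+1)) * Err ≤ (τ (m+2) - τ (m+1)) * Err * E₀^(m+2) :=
            le_mul_of_one_le_right (mul_nonneg hΔpos.le hErr) hE1
          have hpowsucc : E₀^(m+1) * E₀ = E₀^(m+2) := (pow_succ E₀ (m+1)).symm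
          calc dist (ξ (τ (m+2))) (Φ s (ξ s) (τ (m+2) - s))
              ≤ dist (ξ (τ (m+2))) (Φ s (ξ (τ (m+1))) (τ (m+2) - τ (m+1)))
                + dist (Φ s (ξ (τ (m+1))) (τ (m+2) - τ (m+1)))
                    (Φ s (Φ s (ξ s) (τ (m+1) - s)) (τ (m+2) - τ (m+1)))
                + dist (Φ s (Φ s (ξ s) (τ (m+1) - s)) (τ (m+2) - τ (m+1)))
                    (Φ s (ξ s) (τ (m+2) - s)) := dist_triangle4 _ _ _ _
            _ ≤ C * h^α * (τ (m+2) - τ (m+1)) + Err * (τ (m+1) - s) * E₀^(m+1) * E₀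
                + (τ (m+2) - τ (m+1)) * (η * |K_B|) := by
                refine add_le_add (add_le_add ?_ hT2) ?_
                · rw [hξτj1, ← hξτj]; exact hT1
                · rw [show τ (m+2) - s = (τ (m+1) - s) + (τ (m+2) - τ (m+1)) by ring]
                  exact hT3
            _ ≤ Err * (τ (m+2) - s) * E₀^(m+2) := by
                have h2 : Err * (τ (m+1) - s) * E₀^(m+1) * E₀
                    = Err * (τ (m+1) - s) * E₀^(m+2) := by
                  rw [← hpowsucc]; ring
                have h3 : Err * (τ (m+2) - s) * E₀^(m+2)
                    = Err * (τ (m+1) - s) * E₀^(m+2)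
                      + (τ (m+2) - τ (m+1)) * Err * E₀^(m+2) := by ring
                linarith [hΔE, hsum, h2, h3]
  -- conclude
  obtain ⟨k₁, hk₁def⟩ : ∃ k : ℕ, k = ⌊(s+h-t)/δ⌋₊ := ⟨_, rfl⟩
  have h0st' : 0 ≤ (s+h-t)/δ := div_nonneg (by linarith) hδ.le
  have hk1_le : (k₁:ℝ)*δ ≤ s + h - t := by
    have := Nat.floor_le h0st'
    rw [← hk₁def] at this
    calc (k₁:ℝ)*δ ≤ ((s+h-t)/δ)*δ := mul_le_mul_of_nonneg_right this hδ.le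
      _ = s + h - t := by field_simp
  have hk1_lt : s + h - t < ((k₁:ℝ)+1)*δ := by
    have := Nat.lt_floor_add_one ((s+h-t)/δ)
    rw [← hk₁def] at this
    calc s + h - t = ((s+h-t)/δ)*δ := by field_simp
      _ < ((k₁:ℝ)+1)*δ := by
          have := mul_lt_mul_of_pos_right this hδ
          push_cast at this ⊢
          linarith
  have hk01 : k₀ ≤ k₁ := by
    rw [hk₀def, hk₁def]
    exact Nat.floor_le_floor (by gcongr <;> linarith)
  have hJcast : ((k₁ - k₀ + 1 : ℕ):ℝ) = (k₁:ℝ) - (k₀:ℝ) + 1 := by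
    push_cast [Nat.cast_sub hk01]
    ring
  have hτJ : τ (k₁ - k₀ + 1) = s + h := by
    rw [hτs (k₁ - k₀)]
    refine min_eq_right ?_
    have : (k₀:ℝ) + ((k₁ - k₀ + 1 : ℕ):ℝ) = (k₁:ℝ) + 1 := by rw [hJcast]; ring
    rw [this]
    linarith
  have hJδ : ((k₁ - k₀ + 1 : ℕ):ℝ) * δ ≤ 3 := by
    rw [hJcast]
    have hexp1 : ((k₁:ℝ) - (k₀:ℝ) + 1) * δ = (k₁:ℝ)*δ - (k₀:ℝ)*δ + δ := by ring
    rw [hexp1]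
    linarith only [hq_lt, hk1_le, hδ.le, hδh, hhε, hε1]
  have hexp : E₀^(k₁ - k₀ + 1) ≤ Real.exp (3*|K_A|) := by
    rw [hE₀def, ← Real.exp_nat_mul]
    refine Real.exp_le_exp.mpr ?_
    have h1 : ((k₁ - k₀ + 1 : ℕ):ℝ) * (δ * |K_A|) = (((k₁ - k₀ + 1 : ℕ):ℝ) * δ) * |K_A| := by
      ring
    rw [h1]
    exact mul_le_mul_of_nonneg_right hJδ (abs_nonneg _)
  have hfin := key (k₁ - k₀ + 1)
  rw [hτJ, show s + h - s = h by ring] at hfin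
  calc dist (ξ (s+h)) (Φ s (ξ s) h) ≤ Err * h * E₀^(k₁ - k₀ + 1) := hfin
    _ ≤ Err * h * Real.exp (3*|K_A|) :=
        mul_le_mul_of_nonneg_left hexp (mul_nonneg hErr hh.le)
    _ = Real.exp (3*|K_A|) * ((η*|K_B| + C*h^α) * h) := by rw [hErrdef]; ring

lemma eulerCurve_at_t : ξ t = a := by
  have h0 : eulerCurve Φ a t δ (t + (0:ℕ)*δ) = eulerPt Φ a t δ 0 :=
    eulerCurve_grid Φ a t δ hδ hΦ0 0
  simp only [Nat.cast_zero, zero_mul, add_zero] at h0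
  exact h0

lemma cauchy_est (T K_A K_B C α ε η u δ' : ℝ) (g : ℝ → ℝ → ℝ)
    (hδ' : 0 < δ') (hδ'δ : δ' ≤ δ) (hδε : δ ≤ ε) (hε1 : ε ≤ 1)
    (htu : t ≤ u) (huc : u < t + c) (hcT : t + c ≤ T)
    (hCpos : 0 < C) (hα0 : 0 < α) (hη : 0 ≤ η)
    (Hg : ∀ p q, 0 < p → p ≤ δ → 0 < q → q ≤ δ → g p q ≤ η)
    (hgnn : ∀ u v, 0 ≤ g u v)
    (hA : ∀ x ∈ Metric.ball a r, ∀ y ∈ Metric.ball a r, ∀ h ∈ Set.Icc 0 ε,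
      ∀ s ∈ Set.Icc t T, dist (Φ s x h) (Φ s y h) ≤ dist x y * (1 + h * K_A))
    (hB : ∀ b ∈ Metric.ball a r, ∀ l' ∈ Set.Icc 0 ε, ∀ h ∈ Set.Icc 0 ε,
      ∀ s ∈ Set.Icc t T,
        dist (Φ s b (l' + h)) (Φ s (Φ s b l') h) ≤ h * g l' h * K_B)
    (hCcond : ∀ b ∈ Metric.ball a r, ∀ h ∈ Set.Icc 0 ε, ∀ s₁ ∈ Set.Icc t T,
      ∀ s₂ ∈ Set.Icc t T, dist (Φ s₁ b h) (Φ s₂ b h) ≤ C * h * |s₁ - s₂| ^ α) :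
    dist (ξ u) (eulerCurve Φ a t δ' u)
      ≤ 2*ρ₀*δ + c * Real.exp (c*|K_A|) * (Real.exp (3*|K_A|) * (η*|K_B| + C*δ^α)) := by
  have hδ'1 : δ' ≤ 1 := le_trans hδ'δ hδ1
  have hrpow : (0:ℝ) ≤ δ^α := Real.rpow_nonneg hδ.le α
  have hErr' : (0:ℝ) ≤ η*|K_B| + C*δ^α := by
    have h1 := mul_nonneg hη (abs_nonneg K_B)
    have h2 := mul_nonneg hCpos.le hrpow
    linarith
  obtain ⟨e3, he3def⟩ : ∃ e : ℝ, e = Real.exp (3*|K_A|) := ⟨_, rfl⟩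
  have he3 : 1 ≤ e3 := he3def ▸ Real.one_le_exp (by positivity)
  obtain ⟨errn, herrdef⟩ : ∃ e : ℝ, e = e3 * ((η*|K_B| + C*δ^α) * δ) := ⟨_, rfl⟩
  have herrnn : 0 ≤ errn := herrdef ▸
    mul_nonneg (by linarith) (mul_nonneg hErr' hδ.le)
  obtain ⟨E₀, hE₀def⟩ : ∃ e : ℝ, e = Real.exp (δ*|K_A|) := ⟨_, rfl⟩
  have hE₀ : 1 ≤ E₀ := hE₀def ▸ Real.one_le_exp (mul_nonneg hδ.le (abs_nonneg _))
  obtain ⟨K, hKdef⟩ : ∃ k : ℕ, k = ⌊(u-t)/δ⌋₊ := ⟨_, rfl⟩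
  have h0ut : 0 ≤ (u-t)/δ := div_nonneg (by linarith) hδ.le
  have hK_le : (K:ℝ)*δ ≤ u - t := by
    have := Nat.floor_le h0ut
    rw [← hKdef] at this
    calc (K:ℝ)*δ ≤ ((u-t)/δ)*δ := mul_le_mul_of_nonneg_right this hδ.le
      _ = u - t := by field_simp
  have hK_lt : u - t < ((K:ℝ)+1)*δ := by
    have := Nat.lt_floor_add_one ((u-t)/δ)
    rw [← hKdef] at this
    calc u - t = ((u-t)/δ)*δ := by field_simp
      _ < ((K:ℝ)+1)*δ := by
          have := mul_lt_mul_of_pos_right this hδ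
          push_cast at this ⊢
          linarith
  -- the discrete Gronwall induction on grid points of the coarse grid
  have key : ∀ k : ℕ, k ≤ K →
      dist (ξ (t + (k:ℝ)*δ)) (eulerCurve Φ a t δ' (t + (k:ℝ)*δ))
        ≤ errn * k * E₀^k := by
    intro k
    induction k with
    | zero =>
      intro _
      simp only [Nat.cast_zero, zero_mul, add_zero]
      rw [eulerCurve_at_t Φ a t r l ρ₀ δ c hδ hδ1 hΦ0 hρ hcr hcl hc0 hspeed,
        eulerCurve_at_t Φ a t r l ρ₀ δ' c hδ' hδ'1 hΦ0 hρ hcr hcl hc0 hspeed]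
      simp
    | succ k ih =>
      intro hkK
      have hk' : k ≤ K := by omega
      have hkK' : ((k:ℝ)+1)*δ ≤ (K:ℝ)*δ := by
        have : ((k:ℝ)+1) ≤ (K:ℝ) := by exact_mod_cast hkK
        exact mul_le_mul_of_nonneg_right this hδ.le
      have hkc : ((k:ℝ)+1)*δ < c := by linarith
      have hkδ0 : (0:ℝ) ≤ (k:ℝ)*δ := mul_nonneg (Nat.cast_nonneg k) hδ.le
      have hvt : t ≤ t + (k:ℝ)*δ := by linarith
      have hvc : t + (k:ℝ)*δ + δ < t + c := by linarith
      have ihb := ih hk'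
      -- coarse curve does one exact step
      have hgrid1 : ξ (t + (k:ℝ)*δ) = eulerPt Φ a t δ k := eulerCurve_grid Φ a t δ hδ hΦ0 k
      have hgrid2 : ξ (t + ((k+1:ℕ):ℝ)*δ) = Φ (t + (k:ℝ)*δ) (eulerPt Φ a t δ k) δ := by
        have := eulerCurve_eq Φ a t δ hδ hΦ0 k (t + ((k+1:ℕ):ℝ)*δ)
          (by push_cast; linarith [hδ.le]) (by push_cast; linarith)
        rw [this]
        congr 1
        push_cast
        ring
      -- fine curve: master estimate on this cell
      have hmas := master Φ a t r l ρ₀ δ' c hδ' hδ'1 hΦ0 hρ hcr hcl hc0 hspeed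
        T K_A K_B C α ε η (t + (k:ℝ)*δ) δ g hvt hδ hδ'δ hδε hε1
        (by linarith) hcT hCpos hα0 hη Hg hgnn hA hB hCcond
      -- memberships
      have hball1 : ξ (t + (k:ℝ)*δ) ∈ Metric.ball a r := by
        rw [Metric.mem_ball]
        calc dist (ξ (t + (k:ℝ)*δ)) a ≤ ρ₀ * ((t + (k:ℝ)*δ) - t) :=
              eulerCurve_ball Φ a t r l ρ₀ δ c hδ hδ1 hΦ0 hρ hcr hcl hc0 hspeed _
                hvt (by linarith)
          _ < ρ₀ * c := (mul_lt_mul_iff_right₀ hρ).mpr (by linarith)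
          _ ≤ r := hcr
      have hball2 : eulerCurve Φ a t δ' (t + (k:ℝ)*δ) ∈ Metric.ball a r := by
        rw [Metric.mem_ball]
        calc dist (eulerCurve Φ a t δ' (t + (k:ℝ)*δ)) a ≤ ρ₀ * ((t + (k:ℝ)*δ) - t) :=
              eulerCurve_ball Φ a t r l ρ₀ δ' c hδ' hδ'1 hΦ0 hρ hcr hcl hc0 hspeed _
                hvt (by linarith)
          _ < ρ₀ * c := (mul_lt_mul_iff_right₀ hρ).mpr (by linarith)
          _ ≤ r := hcr
      have hvmem : t + (k:ℝ)*δ ∈ Set.Icc t T := ⟨hvt, by linarith⟩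
      have haa := hA (ξ (t + (k:ℝ)*δ)) hball1 (eulerCurve Φ a t δ' (t + (k:ℝ)*δ)) hball2
        δ ⟨hδ.le, hδε⟩ (t + (k:ℝ)*δ) hvmem
      have hfac : 1 + δ * K_A ≤ E₀ := by
        have h2 : δ * K_A ≤ δ * |K_A| := mul_le_mul_of_nonneg_left (le_abs_self _) hδ.le
        have h3 := Real.add_one_le_exp (δ*|K_A|)
        rw [hE₀def]
        linarith
      have hstep1 : dist (Φ (t + (k:ℝ)*δ) (ξ (t + (k:ℝ)*δ)) δ)
          (Φ (t + (k:ℝ)*δ) (eulerCurve Φ a t δ' (t + (k:ℝ)*δ)) δ)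
          ≤ (errn * k * E₀^k) * E₀ := by
        calc dist _ _ ≤ dist (ξ (t + (k:ℝ)*δ)) (eulerCurve Φ a t δ' (t + (k:ℝ)*δ))
              * (1 + δ * K_A) := haa
          _ ≤ dist (ξ (t + (k:ℝ)*δ)) (eulerCurve Φ a t δ' (t + (k:ℝ)*δ)) * E₀ :=
              mul_le_mul_of_nonneg_left hfac dist_nonneg
          _ ≤ (errn * k * E₀^k) * E₀ := mul_le_mul_of_nonneg_right ihb (by linarith)
      have hstep2 : dist (eulerCurve Φ a t δ' (t + (k:ℝ)*δ + δ))
          (Φ (t + (k:ℝ)*δ) (eulerCurve Φ a t δ' (t + (k:ℝ)*δ)) δ) ≤ errn := by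
        calc dist _ _ ≤ Real.exp (3*|K_A|) * ((η*|K_B| + C*δ^α) * δ) := hmas
          _ = errn := by rw [herrdef, he3def]
      have hcast2 : t + ((k+1:ℕ):ℝ)*δ = t + (k:ℝ)*δ + δ := by push_cast; ring
      calc dist (ξ (t + ((k+1:ℕ):ℝ)*δ)) (eulerCurve Φ a t δ' (t + ((k+1:ℕ):ℝ)*δ))
          ≤ dist (ξ (t + ((k+1:ℕ):ℝ)*δ))
              (Φ (t + (k:ℝ)*δ) (eulerCurve Φ a t δ' (t + (k:ℝ)*δ)) δ)
            + dist (Φ (t + (k:ℝ)*δ) (eulerCurve Φ a t δ' (t + (k:ℝ)*δ)) δ)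
                (eulerCurve Φ a t δ' (t + ((k+1:ℕ):ℝ)*δ)) := dist_triangle _ _ _
        _ ≤ (errn * k * E₀^k) * E₀ + errn := by
            refine add_le_add ?_ ?_
            · rw [hgrid2, ← hgrid1]
              exact hstep1
            · rw [hcast2, dist_comm]
              exact hstep2
        _ ≤ errn * ((k+1:ℕ):ℝ) * E₀^(k+1) := by
            have h1 : (errn * k * E₀^k) * E₀ = errn * k * E₀^(k+1) := by
              rw [pow_succ]; ring
            have h2 : errn ≤ errn * E₀^(k+1) :=
              le_mul_of_one_le_right herrnn (one_le_pow₀ hE₀)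
            have h3 : errn * ((k+1:ℕ):ℝ) * E₀^(k+1)
                = errn * k * E₀^(k+1) + errn * E₀^(k+1) := by push_cast; ring
            linarith
  -- conclude: compare at the last grid point and use Lipschitz continuity
  have hEK := key K le_rfl
  have hgKmem1 : t ≤ t + (K:ℝ)*δ := by
    have := mul_nonneg (Nat.cast_nonneg (α := ℝ) K) hδ.le
    linarith
  have hlip1 : dist (ξ (t + (K:ℝ)*δ)) (ξ u) ≤ ρ₀ * (u - (t + (K:ℝ)*δ)) :=
    eulerCurve_lip Φ a t r l ρ₀ δ c hδ hδ1 hΦ0 hρ hcr hcl hc0 hspeed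
      (t + (K:ℝ)*δ) u hgKmem1 (by linarith) huc.le
  have hlip2 : dist (eulerCurve Φ a t δ' (t + (K:ℝ)*δ)) (eulerCurve Φ a t δ' u)
      ≤ ρ₀ * (u - (t + (K:ℝ)*δ)) :=
    eulerCurve_lip Φ a t r l ρ₀ δ' c hδ' hδ'1 hΦ0 hρ hcr hcl hc0 hspeed
      (t + (K:ℝ)*δ) u hgKmem1 (by linarith) huc.le
  have hEKbound : errn * K * E₀^K
      ≤ c * Real.exp (c*|K_A|) * (Real.exp (3*|K_A|) * (η*|K_B| + C*δ^α)) := by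
    have hKδc : (K:ℝ)*δ ≤ c := by linarith
    have hpower : E₀^K ≤ Real.exp (c*|K_A|) := by
      rw [hE₀def, ← Real.exp_nat_mul]
      refine Real.exp_le_exp.mpr ?_
      have h1 : (K:ℝ) * (δ * |K_A|) = ((K:ℝ)*δ) * |K_A| := by ring
      rw [h1]
      exact mul_le_mul_of_nonneg_right hKδc (abs_nonneg _)
    have h2 : errn * K = e3 * (η*|K_B| + C*δ^α) * ((K:ℝ)*δ) := by
      rw [herrdef]; ring
    have h3 : errn * K ≤ e3 * (η*|K_B| + C*δ^α) * c := by
      rw [h2]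
      exact mul_le_mul_of_nonneg_left hKδc (mul_nonneg (by linarith) hErr')
    have h4 : 0 ≤ errn * K := mul_nonneg herrnn (Nat.cast_nonneg K)
    have h5 : 0 ≤ Real.exp (c*|K_A|) := (Real.exp_pos _).le
    calc errn * K * E₀^K ≤ (e3 * (η*|K_B| + C*δ^α) * c) * Real.exp (c*|K_A|) :=
          mul_le_mul h3 hpower (by positivity) (by positivity)
      _ = c * Real.exp (c*|K_A|) * (Real.exp (3*|K_A|) * (η*|K_B| + C*δ^α)) := by
          rw [he3def]; ring
  have hrem : u - (t + (K:ℝ)*δ) ≤ δ := by linarith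
  have hrem0 : 0 ≤ u - (t + (K:ℝ)*δ) := by linarith
  calc dist (ξ u) (eulerCurve Φ a t δ' u)
      ≤ dist (ξ u) (ξ (t + (K:ℝ)*δ))
        + dist (ξ (t + (K:ℝ)*δ)) (eulerCurve Φ a t δ' (t + (K:ℝ)*δ))
        + dist (eulerCurve Φ a t δ' (t + (K:ℝ)*δ)) (eulerCurve Φ a t δ' u) :=
        dist_triangle4 _ _ _ _
    _ ≤ ρ₀ * (u - (t + (K:ℝ)*δ)) + errn * K * E₀^K + ρ₀ * (u - (t + (K:ℝ)*δ)) := by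
        refine add_le_add (add_le_add ?_ hEK) hlip2
        rw [dist_comm]
        exact hlip1
    _ ≤ 2*ρ₀*δ + c * Real.exp (c*|K_A|) * (Real.exp (3*|K_A|) * (η*|K_B| + C*δ^α)) := by
        have h6 : ρ₀ * (u - (t + (K:ℝ)*δ)) ≤ ρ₀ * δ := mul_le_mul_of_nonneg_left hrem hρ.le
        linarith [hEKbound]

end

theorem existence_solution_curve {X : Type*} [MetricSpace X]
    (Φ : ℝ → X → ℝ → X) (a : X) (t r l T ρ₀ K_A K_B C α ε : ℝ) (g : ℝ → ℝ → ℝ)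
    (hr : 0 < r) (hl : 0 < l) (hρ : 0 < ρ₀) (hε : ε ∈ Set.Ioc (0 : ℝ) 1)
    (hα : α ∈ Set.Ioo (0 : ℝ) 1) (hCpos : 0 < C) (ht : 0 ≤ t)
    (hT : t + min (r / ρ₀) l ≤ T)
    (hΦ0 : ∀ (s : ℝ) (x : X), Φ s x 0 = x)
    (hspeed : ∀ y ∈ Metric.closedBall a r, ∀ s : ℝ, |s - t| ≤ l →
      ∀ h₁ ∈ Set.Icc (0 : ℝ) 1, ∀ h₂ ∈ Set.Icc (0 : ℝ) 1,
        dist (Φ s y h₁) (Φ s y h₂) ≤ ρ₀ * |h₁ - h₂|)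
    (hcomplete : IsComplete (Metric.closedBall a r))
    (hA : ∀ x ∈ Metric.ball a r, ∀ y ∈ Metric.ball a r, ∀ h ∈ Set.Icc 0 ε,
      ∀ s ∈ Set.Icc t T, dist (Φ s x h) (Φ s y h) ≤ dist x y * (1 + h * K_A))
    (hB : ∀ b ∈ Metric.ball a r, ∀ l' ∈ Set.Icc 0 ε, ∀ h ∈ Set.Icc 0 ε,
      ∀ s ∈ Set.Icc t T,
        dist (Φ s b (l' + h)) (Φ s (Φ s b l') h) ≤ h * g l' h * K_B)
    (hgnn : ∀ u v, 0 ≤ g u v)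
    (hg0 : Filter.Tendsto (fun q : ℝ × ℝ => g q.1 q.2)
      ((nhdsWithin 0 (Set.Ioi 0)) ×ˢ (nhdsWithin 0 (Set.Ioi 0))) (nhds 0))
    (hgsum : Summable fun i : ℕ => g (1 / 2 ^ i) (1 / 2 ^ i))
    (hCcond : ∀ b ∈ Metric.ball a r, ∀ h ∈ Set.Icc 0 ε, ∀ s₁ ∈ Set.Icc t T,
      ∀ s₂ ∈ Set.Icc t T, dist (Φ s₁ b h) (Φ s₂ b h) ≤ C * h * |s₁ - s₂| ^ α) :
    ∃ σ : ℝ → X, σ t = a ∧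
      ∀ s ∈ Set.Ico t (t + min (r / ρ₀) l),
        Filter.Tendsto (fun h => dist (σ (s + h)) (Φ s (σ s) h) / h)
          (nhdsWithin 0 (Set.Ioi 0)) (nhds 0) := by
  obtain ⟨hε0, hε1⟩ := hε
  obtain ⟨hα0, hα1⟩ := hα
  obtain ⟨c, hcdef⟩ : ∃ c : ℝ, c = min (r / ρ₀) l := ⟨_, rfl⟩
  have hc0 : 0 < c := hcdef ▸ lt_min (div_pos hr hρ) hl
  have hcl : c ≤ l := hcdef ▸ min_le_right _ _
  have hcr : ρ₀ * c ≤ r := by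
    have h1 : c ≤ r / ρ₀ := hcdef ▸ min_le_left _ _
    calc ρ₀ * c ≤ ρ₀ * (r / ρ₀) := mul_le_mul_of_nonneg_left h1 hρ.le
      _ = r := by field_simp
  have hcT : t + c ≤ T := hcdef ▸ hT
  -- the dyadic step sizes
  obtain ⟨δseq, hδseqdef⟩ : ∃ d : ℕ → ℝ, d = fun n : ℕ => ε * (1/2 : ℝ)^n := ⟨_, rfl⟩
  have hδpos : ∀ n, 0 < δseq n := by
    intro n; rw [hδseqdef]; positivity
  have hδle : ∀ n, δseq n ≤ ε := by
    intro n
    rw [hδseqdef]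
    calc ε * (1/2:ℝ)^n ≤ ε * 1 := by
          refine mul_le_mul_of_nonneg_left ?_ hε0.le
          exact pow_le_one₀ (by norm_num) (by norm_num)
      _ = ε := mul_one ε
  have hδanti : ∀ m n : ℕ, n ≤ m → δseq m ≤ δseq n := by
    intro m n hnm
    rw [hδseqdef]
    exact mul_le_mul_of_nonneg_left
      (pow_le_pow_of_le_one (by norm_num) (by norm_num) hnm) hε0.le
  have hδtend : Filter.Tendsto δseq Filter.atTop (nhds 0) := by
    rw [hδseqdef]
    have h2 : Filter.Tendsto (fun n : ℕ => (1/2:ℝ)^n) Filter.atTop (nhds 0) :=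
      tendsto_pow_atTop_nhds_zero_of_lt_one (by norm_num) (by norm_num)
    simpa using h2.const_mul ε
  have hδαtend : Filter.Tendsto (fun n => (δseq n)^α) Filter.atTop (nhds 0) := by
    have hcont := Real.continuousAt_rpow_const 0 α (Or.inr hα0.le)
    have := hcont.tendsto.comp hδtend
    rwa [Real.zero_rpow hα0.ne'] at this
  -- smallness of g near (0,0)
  have Hsmall : ∀ η : ℝ, 0 < η → ∃ d : ℝ, 0 < d ∧
      ∀ p q : ℝ, 0 < p → p < d → 0 < q → q < d → g p q ≤ η := by
    intro η hη
    have hev : ∀ᶠ q in ((nhdsWithin (0:ℝ) (Set.Ioi 0)) ×ˢ (nhdsWithin (0:ℝ) (Set.Ioi 0))),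
        dist (g q.1 q.2) 0 < η := (Metric.tendsto_nhds.mp hg0) η hη
    rw [Filter.eventually_prod_iff] at hev
    obtain ⟨pa, hpa, pb, hpb, hcomb⟩ := hev
    rw [Filter.Eventually, mem_nhdsGT_iff_exists_Ioc_subset] at hpa hpb
    obtain ⟨d₁, hd₁, hsub₁⟩ := hpa
    obtain ⟨d₂, hd₂, hsub₂⟩ := hpb
    refine ⟨min d₁ d₂, lt_min hd₁ hd₂, ?_⟩
    intro p q hp hpd hq hqd
    have hpp : pa p := hsub₁ ⟨hp, le_of_lt (lt_of_lt_of_le hpd (min_le_left _ _))⟩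
    have hqq : pb q := hsub₂ ⟨hq, le_of_lt (lt_of_lt_of_le hqd (min_le_right _ _))⟩
    have := hcomb hpp hqq
    rw [Real.dist_eq, sub_zero] at this
    exact le_of_lt (lt_of_le_of_lt (le_abs_self _) this)
  -- the approximating Euler curves converge pointwise
  have hcurveball : ∀ n, ∀ u ∈ Set.Ico t (t + c),
      eulerCurve Φ a t (δseq n) u ∈ Metric.closedBall a r := by
    intro n u hu
    rw [Metric.mem_closedBall]
    calc dist (eulerCurve Φ a t (δseq n) u) a ≤ ρ₀ * (u - t) :=
          eulerCurve_ball Φ a t r l ρ₀ (δseq n) c (hδpos n)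
            (le_trans (hδle n) hε1) hΦ0 hρ hcr hcl hc0.le hspeed u hu.1
            (by linarith [hu.2])
      _ ≤ ρ₀ * c := mul_le_mul_of_nonneg_left (by linarith [hu.2]) hρ.le
      _ ≤ r := hcr
  have hcauchy : ∀ u ∈ Set.Ico t (t + c),
      CauchySeq (fun n => eulerCurve Φ a t (δseq n) u) := by
    intro u hu
    rw [Metric.cauchySeq_iff']
    intro ν hν
    -- choose η small
    obtain ⟨A, hAdef⟩ : ∃ A : ℝ, A = c * Real.exp (c*|K_A|) * Real.exp (3*|K_A|) :=
      ⟨_, rfl⟩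
    have hA0 : 0 < A := by rw [hAdef]; positivity
    obtain ⟨η, hηdef⟩ : ∃ η : ℝ, η = ν / (2 * (A + 1) * (|K_B| + 1)) := ⟨_, rfl⟩
    have hη0 : 0 < η := by
      rw [hηdef]
      have := abs_nonneg K_B
      positivity
    obtain ⟨d, hd0, hdprop⟩ := Hsmall η hη0
    -- the bound sequence tends to a limit < ν
    obtain ⟨B, hBdef⟩ : ∃ B : ℕ → ℝ, B = fun n =>
        2*ρ₀*(δseq n) + c * Real.exp (c*|K_A|)
          * (Real.exp (3*|K_A|) * (η*|K_B| + C*(δseq n)^α)) := ⟨_, rfl⟩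
    have hBtend : Filter.Tendsto B Filter.atTop
        (nhds (A * (η * |K_B|))) := by
      rw [hBdef, hAdef]
      have h1 : Filter.Tendsto (fun n => 2*ρ₀*(δseq n)) Filter.atTop (nhds 0) := by
        simpa using hδtend.const_mul (2*ρ₀)
      have h2 : Filter.Tendsto (fun n => C*(δseq n)^α) Filter.atTop (nhds 0) := by
        simpa using hδαtend.const_mul C
      have h3 : Filter.Tendsto (fun n => η*|K_B| + C*(δseq n)^α) Filter.atTop
          (nhds (η*|K_B|)) := by
        have := h2.const_add (η*|K_B|)
        simpa using this
      have h4 := (h3.const_mul (Real.exp (3*|K_A|))).const_mul (c * Real.exp (c*|K_A|))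
      have h5 := h1.add h4
      simpa [mul_assoc] using h5
    have hlim_lt : A * (η * |K_B|) < ν := by
      have hKB := abs_nonneg K_B
      have heq : (A+1) * (|K_B|+1) * η = ν/2 := by
        rw [hηdef]
        field_simp
      have hle : A * (η * |K_B|) ≤ (A+1) * (|K_B|+1) * η := by nlinarith [hη0.le]
      linarith
    have hev1 : ∀ᶠ n in Filter.atTop, δseq n < d := hδtend.eventually_lt_const hd0
    have hev2 : ∀ᶠ n in Filter.atTop, B n < ν := hBtend.eventually_lt_const hlim_lt
    obtain ⟨N, hN⟩ := (hev1.and hev2).exists_forall_of_atTop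
    refine ⟨N, fun n hn => ?_⟩
    have hNd : δseq N < d := (hN N le_rfl).1
    have hBN : B N < ν := (hN N le_rfl).2
    have hest := cauchy_est Φ a t r l ρ₀ (δseq N) c (hδpos N)
      (le_trans (hδle N) hε1) hΦ0 hρ hcr hcl hc0.le hspeed
      T K_A K_B C α ε η u (δseq n) g (hδpos n) (hδanti n N hn) (hδle N) hε1
      hu.1 hu.2 hcT hCpos hα0 hη0.le
      (fun p q hp hpd hq hqd => hdprop p q hp (lt_of_le_of_lt hpd hNd)
        hq (lt_of_le_of_lt hqd hNd))
      hgnn hA hB hCcond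
    rw [dist_comm]
    calc dist (eulerCurve Φ a t (δseq N) u) (eulerCurve Φ a t (δseq n) u)
        ≤ 2*ρ₀*(δseq N) + c * Real.exp (c*|K_A|)
            * (Real.exp (3*|K_A|) * (η*|K_B| + C*(δseq N)^α)) := hest
      _ = B N := by rw [hBdef]
      _ < ν := hBN
  have hlim : ∀ u ∈ Set.Ico t (t + c), ∃ p ∈ Metric.closedBall a r,
      Filter.Tendsto (fun n => eulerCurve Φ a t (δseq n) u) Filter.atTop (nhds p) := by
    intro u hu
    exact cauchySeq_tendsto_of_isComplete hcomplete
      (fun n => hcurveball n u hu) (hcauchy u hu)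
  choose σ₀ hσ₀mem hσ₀lim using hlim
  obtain ⟨σ, hσdef⟩ : ∃ σ : ℝ → X, σ = fun u =>
      if hu : u ∈ Set.Ico t (t + c) then σ₀ u hu else a := ⟨_, rfl⟩
  have hσeq : ∀ u (hu : u ∈ Set.Ico t (t + c)), σ u = σ₀ u hu := by
    intro u hu; rw [hσdef]; exact dif_pos hu
  have htmem : t ∈ Set.Ico t (t + c) := ⟨le_rfl, by linarith⟩
  have hσt : σ t = a := by
    rw [hσeq t htmem]
    have hconst : (fun n => eulerCurve Φ a t (δseq n) t) = fun _ => a := by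
      funext n
      exact eulerCurve_at_t Φ a t r l ρ₀ (δseq n) c (hδpos n)
        (le_trans (hδle n) hε1) hΦ0 hρ hcr hcl hc0.le hspeed
    have h1 := hσ₀lim t htmem
    rw [hconst] at h1
    exact tendsto_nhds_unique h1 tendsto_const_nhds
  have hσdist : ∀ u (hu : u ∈ Set.Ico t (t + c)), dist (σ u) a ≤ ρ₀ * (u - t) := by
    intro u hu
    rw [hσeq u hu]
    have h1 : Filter.Tendsto (fun n => dist (eulerCurve Φ a t (δseq n) u) a)
        Filter.atTop (nhds (dist (σ₀ u hu) a)) := (hσ₀lim u hu).dist tendsto_const_nhds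
    refine le_of_tendsto h1 (Filter.Eventually.of_forall fun n => ?_)
    exact eulerCurve_ball Φ a t r l ρ₀ (δseq n) c (hδpos n)
      (le_trans (hδle n) hε1) hΦ0 hρ hcr hcl hc0.le hspeed u hu.1 (by linarith [hu.2])
  have hσball : ∀ u (hu : u ∈ Set.Ico t (t + c)), σ u ∈ Metric.ball a r := by
    intro u hu
    rw [Metric.mem_ball]
    calc dist (σ u) a ≤ ρ₀ * (u - t) := hσdist u hu
      _ < ρ₀ * c := (mul_lt_mul_iff_right₀ hρ).mpr (by linarith [hu.2, hu.1])
      _ ≤ r := hcr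
  refine ⟨σ, hσt, ?_⟩
  rw [← hcdef]
  intro s hs
  -- tangency at s
  rw [Metric.tendsto_nhdsWithin_nhds]
  intro ν hν
  obtain ⟨e3, he3def⟩ : ∃ e : ℝ, e = Real.exp (3*|K_A|) := ⟨_, rfl⟩
  have he3pos : 0 < e3 := he3def ▸ Real.exp_pos _
  obtain ⟨η, hηdef⟩ : ∃ η : ℝ, η = ν / (2 * e3 * (|K_B| + 1)) := ⟨_, rfl⟩
  have hη0 : 0 < η := by
    rw [hηdef]
    have := abs_nonneg K_B
    positivity
  obtain ⟨d, hd0, hdprop⟩ := Hsmall η hη0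
  obtain ⟨Z, hZdef⟩ : ∃ z : ℝ, z = (ν / (2 * e3 * C)) ^ (1/α : ℝ) := ⟨_, rfl⟩
  have hZ0 : 0 < Z := hZdef ▸ Real.rpow_pos_of_pos (by positivity) _
  obtain ⟨h₀, hh₀def⟩ : ∃ x : ℝ, x = min (min d ε) (min ((t + c) - s) Z) := ⟨_, rfl⟩
  have hh₀0 : 0 < h₀ := by
    rw [hh₀def]
    exact lt_min (lt_min hd0 hε0) (lt_min (by linarith [hs.2]) hZ0)
  refine ⟨h₀, hh₀0, ?_⟩
  intro h hmem hdist
  have hh : 0 < h := hmem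
  rw [Real.dist_eq, sub_zero, abs_of_nonneg hh.le] at hdist
  have hhd : h < d := lt_of_lt_of_le hdist (by rw [hh₀def]; exact le_trans (min_le_left _ _) (min_le_left _ _))
  have hhε : h ≤ ε := le_of_lt (lt_of_lt_of_le hdist (by rw [hh₀def]; exact le_trans (min_le_left _ _) (min_le_right _ _)))
  have hsh : s + h < t + c := by
    have := lt_of_lt_of_le hdist (by rw [hh₀def]; exact le_trans (min_le_right _ _) (min_le_left _ _) : h₀ ≤ (t + c) - s)
    linarith
  have hhZ : h < Z := lt_of_lt_of_le hdist (by rw [hh₀def]; exact le_trans (min_le_right _ _) (min_le_right _ _))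
  have hshmem : s + h ∈ Set.Ico t (t + c) := ⟨by linarith [hs.1], hsh⟩
  have hsmem' : s ∈ Set.Icc t T := ⟨hs.1, by linarith [hs.2]⟩
  -- key bound : dist (σ (s+h)) (Φ s (σ s) h) ≤ e3 * ((η*|K_B| + C*h^α) * h)
  have hkey : dist (σ (s+h)) (Φ s (σ s) h) ≤ e3 * ((η*|K_B| + C*h^α) * h) := by
    have hev : ∀ᶠ n in Filter.atTop,
        dist (σ (s+h)) (Φ s (σ s) h)
          ≤ dist (σ (s+h)) (eulerCurve Φ a t (δseq n) (s+h))
            + e3 * ((η*|K_B| + C*h^α) * h)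
            + dist (eulerCurve Φ a t (δseq n) s) (σ s) * (1 + h*|K_A|) := by
      refine (hδtend.eventually_lt_const hh).mono fun n hn => ?_
      have hδh : δseq n ≤ h := hn.le
      have hmas := master Φ a t r l ρ₀ (δseq n) c (hδpos n)
        (le_trans (hδle n) hε1) hΦ0 hρ hcr hcl hc0.le hspeed
        T K_A K_B C α ε η s h g hs.1 hh hδh hhε hε1 hsh hcT hCpos hα0 hη0.le
        (fun p q hp hpd hq hqd => hdprop p q hp (lt_of_le_of_lt hpd hhd)
          hq (lt_of_le_of_lt hqd hhd))
        hgnn hA hB hCcond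
      have hnball : eulerCurve Φ a t (δseq n) s ∈ Metric.ball a r := by
        rw [Metric.mem_ball]
        calc dist (eulerCurve Φ a t (δseq n) s) a ≤ ρ₀ * (s - t) :=
              eulerCurve_ball Φ a t r l ρ₀ (δseq n) c (hδpos n)
                (le_trans (hδle n) hε1) hΦ0 hρ hcr hcl hc0.le hspeed s hs.1
                (by linarith [hs.2])
          _ < ρ₀ * c := (mul_lt_mul_iff_right₀ hρ).mpr (by linarith [hs.2])
          _ ≤ r := hcr
      have haa := hA (eulerCurve Φ a t (δseq n) s) hnball (σ s) (hσball s hs)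
        h ⟨hh.le, hhε⟩ s hsmem'
      have hthird : dist (Φ s (eulerCurve Φ a t (δseq n) s) h) (Φ s (σ s) h)
          ≤ dist (eulerCurve Φ a t (δseq n) s) (σ s) * (1 + h*|K_A|) := by
        refine le_trans haa ?_
        refine mul_le_mul_of_nonneg_left ?_ dist_nonneg
        have := le_abs_self K_A
        nlinarith [hh.le]
      calc dist (σ (s+h)) (Φ s (σ s) h)
          ≤ dist (σ (s+h)) (eulerCurve Φ a t (δseq n) (s+h))
            + dist (eulerCurve Φ a t (δseq n) (s+h)) (Φ s (eulerCurve Φ a t (δseq n) s) h)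
            + dist (Φ s (eulerCurve Φ a t (δseq n) s) h) (Φ s (σ s) h) :=
            dist_triangle4 _ _ _ _
        _ ≤ dist (σ (s+h)) (eulerCurve Φ a t (δseq n) (s+h))
            + e3 * ((η*|K_B| + C*h^α) * h)
            + dist (eulerCurve Φ a t (δseq n) s) (σ s) * (1 + h*|K_A|) := by
            refine add_le_add (add_le_add le_rfl ?_) hthird
            rw [he3def]
            exact hmas
    have htendf : Filter.Tendsto (fun n =>
        dist (σ (s+h)) (eulerCurve Φ a t (δseq n) (s+h))
          + e3 * ((η*|K_B| + C*h^α) * h)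
          + dist (eulerCurve Φ a t (δseq n) s) (σ s) * (1 + h*|K_A|))
        Filter.atTop (nhds (e3 * ((η*|K_B| + C*h^α) * h))) := by
      have h1 : Filter.Tendsto (fun n => dist (σ (s+h)) (eulerCurve Φ a t (δseq n) (s+h)))
          Filter.atTop (nhds 0) := by
        rw [show (fun n => dist (σ (s+h)) (eulerCurve Φ a t (δseq n) (s+h)))
            = (fun n => dist (eulerCurve Φ a t (δseq n) (s+h)) (σ₀ (s+h) hshmem)) from
          funext fun n => by rw [dist_comm, hσeq (s+h) hshmem]]
        have h0 := (hσ₀lim (s+h) hshmem).dist (tendsto_const_nhds (x := σ₀ (s+h) hshmem))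
        rwa [dist_self] at h0
      have h2 : Filter.Tendsto (fun n => dist (eulerCurve Φ a t (δseq n) s) (σ s))
          Filter.atTop (nhds 0) := by
        rw [show (fun n => dist (eulerCurve Φ a t (δseq n) s) (σ s))
            = (fun n => dist (eulerCurve Φ a t (δseq n) s) (σ₀ s hs)) from
          funext fun n => by rw [hσeq s hs]]
        have h0 := (hσ₀lim s hs).dist (tendsto_const_nhds (x := σ₀ s hs))
        rwa [dist_self] at h0
      have h3 := (h1.add_const (e3 * ((η*|K_B| + C*h^α) * h))).add
        (h2.mul_const (1 + h*|K_A|))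
      simpa using h3
    exact ge_of_tendsto htendf hev
  -- final numeric bound
  have hratio : dist (σ (s+h)) (Φ s (σ s) h) / h ≤ e3 * (η*|K_B| + C*h^α) := by
    rw [div_le_iff₀ hh]
    calc dist (σ (s+h)) (Φ s (σ s) h) ≤ e3 * ((η*|K_B| + C*h^α) * h) := hkey
      _ = e3 * (η*|K_B| + C*h^α) * h := by ring
  have hbound1 : e3 * (η*|K_B|) < ν/2 := by
    have heq : e3 * η * (|K_B|+1) = ν/2 := by
      rw [hηdef]
      field_simp
    have hlt : e3 * η * |K_B| < e3 * η * (|K_B|+1) := by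
      refine (mul_lt_mul_iff_right₀ (by positivity)).mpr ?_
      linarith
    calc e3 * (η*|K_B|) = e3 * η * |K_B| := by ring
      _ < e3 * η * (|K_B|+1) := hlt
      _ = ν/2 := heq
  have hbound2 : e3 * (C*h^α) < ν/2 := by
    have hW : (0:ℝ) < ν / (2 * e3 * C) := by positivity
    have hZα : Z ^ α = ν / (2 * e3 * C) := by
      rw [hZdef, ← Real.rpow_mul hW.le, one_div_mul_cancel hα0.ne', Real.rpow_one]
    have hhα : h ^ α < Z ^ α := Real.rpow_lt_rpow hh.le hhZ hα0
    have h1 : C * h^α < C * (ν / (2 * e3 * C)) := by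
      rw [← hZα]
      exact (mul_lt_mul_iff_right₀ hCpos).mpr hhα
    have h2 : e3 * (C * h^α) < e3 * (C * (ν / (2 * e3 * C))) :=
      (mul_lt_mul_iff_right₀ he3pos).mpr h1
    have h3 : e3 * (C * (ν / (2 * e3 * C))) = ν/2 := by
      field_simp
    linarith
  have hfinal : dist (σ (s+h)) (Φ s (σ s) h) / h < ν := by
    have : e3 * (η*|K_B| + C*h^α) = e3 * (η*|K_B|) + e3 * (C*h^α) := by ring
    linarith [hratio]
  rw [Real.dist_eq, sub_zero, abs_of_nonneg (div_nonneg dist_nonneg hh.le)]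
  exact hfinal
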